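/- Let (E, sim, ser) be a comtrace alphabet and let u = A₁…A_k (with k ≥ 1) be a canonical step sequence. Then A₁ = { a ∈ E | there exists a step sequence w ≡ u whose first step contains a }. -/

import Mathlib

variable {E : Type*}

/-- A step over a comtrace alphabet `(E, sim, ser)`: a nonempty finite set of events,
pairwise related by `sim`. -/
def IsStep [DecidableEq E] (sim : E → E → Prop) (A : Finset E) : Prop :=
  A.Nonempty ∧ ∀ a ∈ A, ∀ b ∈ A, a ≠ b → sim a b

/-- A step sequence: a finite list of steps. -/
def IsStepSeq [DecidableEq E] (sim : E → E → Prop) (u : List (Finset E)) : Prop :=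
  ∀ A ∈ u, IsStep sim A

/-- The generating relation of comtrace congruence:
`w·A·z ≈ w·B·C·z` whenever `A`, `B`, `C` are steps with `B ∪ C = A` and `B × C ⊆ ser`. -/
def CTBase [DecidableEq E] (sim ser : E → E → Prop) (u v : List (Finset E)) : Prop :=
  ∃ (w z : List (Finset E)) (A B C : Finset E),
    IsStepSeq sim w ∧ IsStepSeq sim z ∧
    IsStep sim A ∧ IsStep sim B ∧ IsStep sim C ∧
    B ∪ C = A ∧ (∀ b ∈ B, ∀ c ∈ C, ser b c) ∧
    u = w ++ A :: z ∧ v = w ++ B :: C :: z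

/-- The least equivalence relation containing `base`. -/
def LeastEquiv {α : Type*} (base : α → α → Prop) (x y : α) : Prop :=
  ∀ c : α → α → Prop, Equivalence c → (∀ a b, base a b → c a b) → c x y

/-- Comtrace congruence: the least equivalence relation containing `CTBase`. -/
def CTEquiv [DecidableEq E] (sim ser : E → E → Prop) :
    List (Finset E) → List (Finset E) → Prop :=
  LeastEquiv (CTBase sim ser)

/-- Forward dependency on steps: `(A, B) ∈ FD` iff there is a step `C ⊆ B` with
`A × C ⊆ ser` and `C × (B \ C) ⊆ ser`. -/
def FD [DecidableEq E] (sim ser : E → E → Prop) (A B : Finset E) : Prop :=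
  ∃ C : Finset E, IsStep sim C ∧ C ⊆ B ∧
    (∀ a ∈ A, ∀ c ∈ C, ser a c) ∧ (∀ c ∈ C, ∀ b ∈ B \ C, ser c b)

/-- A step sequence `A₁…A_k` is canonical iff `(Aᵢ, Aᵢ₊₁) ∉ FD` for all `1 ≤ i < k`. -/
def Canonical [DecidableEq E] (sim ser : E → E → Prop) (u : List (Finset E)) : Prop :=
  u.Chain' (fun A B => ¬ FD sim ser A B)

section Aux

variable {E : Type*}

/-- Number of steps of `v` containing `e` (= number of occurrences of `e`). -/
def cnt [DecidableEq E] (e : E) (v : List (Finset E)) : ℕ :=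
  (v.filter (fun X => e ∈ X)).length

lemma cnt_append [DecidableEq E] (e : E) (x y : List (Finset E)) :
    cnt e (x ++ y) = cnt e x + cnt e y := by
  simp [cnt, List.filter_append]

lemma cnt_cons [DecidableEq E] (e : E) (X : Finset E) (r : List (Finset E)) :
    cnt e (X :: r) = (if e ∈ X then 1 else 0) + cnt e r := by
  by_cases h : e ∈ X <;> simp [cnt, List.filter_cons, h, Nat.add_comm]

lemma cnt_take_le [DecidableEq E] (e : E) (v : List (Finset E)) {p q : ℕ} (h : p ≤ q) :
    cnt e (v.take p) ≤ cnt e (v.take q) := by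
  have h1 : v.take p = (v.take q).take p := by
    rw [List.take_take, Nat.min_eq_left h]
  have h2 : (v.take q).take p ++ (v.take q).drop p = v.take q := List.take_append_drop _ _
  calc cnt e (v.take p) = cnt e ((v.take q).take p) := by rw [h1]
    _ ≤ cnt e ((v.take q).take p) + cnt e ((v.take q).drop p) := Nat.le_add_right _ _
    _ = cnt e (v.take q) := by rw [← cnt_append, h2]

lemma cnt_take_succ [DecidableEq E] (e : E) (v : List (Finset E)) {i : ℕ}
    (h : i < v.length) :
    cnt e (v.take (i + 1)) = cnt e (v.take i) + (if e ∈ v[i] then 1 else 0) := by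
  rw [List.take_succ, cnt_append]
  congr 1
  simp [List.getElem?_eq_getElem h, cnt, List.filter_cons]
  split <;> simp

/-- `n`-th occurrence of `b` is strictly before the `m`-th occurrence of `c`
(occurrence indices counted from 0). -/
def Before [DecidableEq E] (v : List (Finset E)) (b c : E) (n m : ℕ) : Prop :=
  ∃ x y, v = x ++ y ∧ n < cnt b x ∧ cnt c x ≤ m

/-- The invariant preserved by comtrace congruence. -/
def CTInv [DecidableEq E] (ser : E → E → Prop) (v w : List (Finset E)) : Prop :=
  (∀ e, cnt e v = cnt e w) ∧
  ∀ b c n m, ¬ ser b c → (Before v b c n m ↔ Before w b c n m)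

lemma inv_equivalence [DecidableEq E] (ser : E → E → Prop) : Equivalence (CTInv ser) where
  refl _ := ⟨fun _ => rfl, fun _ _ _ _ _ => Iff.rfl⟩
  symm h := ⟨fun e => (h.1 e).symm, fun b c n m hbc => (h.2 b c n m hbc).symm⟩
  trans h1 h2 := ⟨fun e => (h1.1 e).trans (h2.1 e),
    fun b c n m hbc => (h1.2 b c n m hbc).trans (h2.2 b c n m hbc)⟩

lemma inv_base [DecidableEq E] {sim ser : E → E → Prop}
    (hser_irr : ∀ e, ¬ ser e e) {v w : List (Finset E)}
    (h : CTBase sim ser v w) : CTInv ser v w := by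
  obtain ⟨p, z, A, B, C, -, -, -, -, -, hBC, hserBC, hv, hw⟩ := h
  have hdisj : ∀ e, e ∈ B → e ∈ C → False := fun e hb hc => hser_irr e (hserBC e hb e hc)
  have hmemA : ∀ e, e ∈ A ↔ e ∈ B ∨ e ∈ C := by
    intro e; rw [← hBC, Finset.mem_union]
  have hind : ∀ (e : E) (r : List (Finset E)), cnt e (A :: r) = cnt e (B :: C :: r) := by
    intro e r
    rw [cnt_cons, cnt_cons, cnt_cons]
    by_cases hb : e ∈ B <;> by_cases hc : e ∈ C
    · exact absurd hc (fun hc => hdisj e hb hc)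
    · simp [hb, hc, (hmemA e).mpr (Or.inl hb)]
    · simp [hb, hc, (hmemA e).mpr (Or.inr hc)]
    · have : e ∉ A := fun hA => by rcases (hmemA e).mp hA with h' | h' <;> [exact hb h'; exact hc h']
      simp [hb, hc, this]
  subst hv hw
  constructor
  · intro e; rw [cnt_append, cnt_append, hind]
  · intro b c n m hbc
    constructor
    · rintro ⟨x, y, hxy, hn, hm⟩
      rcases List.append_eq_append_iff.mp hxy.symm with ⟨a', hp, hy⟩ | ⟨c', hx, hy⟩
      · -- p = x ++ a', y = a' ++ A :: z
        exact ⟨x, a' ++ B :: C :: z, by rw [hp]; simp, hn, hm⟩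
      · -- x = p ++ c', A :: z = c' ++ y
        cases c' with
        | nil =>
          simp only [List.append_nil] at hx
          exact ⟨x, B :: C :: z, by rw [hx], hn, hm⟩
        | cons A' a'' =>
          rw [List.cons_append] at hy
          obtain ⟨rfl, hz⟩ := List.cons.inj hy
          refine ⟨p ++ B :: C :: a'', y, by rw [hz]; simp, ?_, ?_⟩
          · have : cnt b (p ++ B :: C :: a'') = cnt b x := by
              rw [hx, cnt_append, cnt_append, hind]
            omega
          · have : cnt c (p ++ B :: C :: a'') = cnt c x := by
              rw [hx, cnt_append, cnt_append, hind]
            omega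
    · rintro ⟨x, y, hxy, hn, hm⟩
      rcases List.append_eq_append_iff.mp hxy.symm with ⟨a', hp, hy⟩ | ⟨c', hx, hy⟩
      · -- p = x ++ a', y = a' ++ B :: C :: z
        exact ⟨x, a' ++ A :: z, by rw [hp]; simp, hn, hm⟩
      · -- x = p ++ c', B :: C :: z = c' ++ y
        cases c' with
        | nil =>
          simp only [List.append_nil] at hx
          exact ⟨x, A :: z, by rw [hx], hn, hm⟩
        | cons B' c₂ =>
          rw [List.cons_append] at hy
          obtain ⟨rfl, hy2⟩ := List.cons.inj hy
          cases c₂ with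
          | nil =>
            simp only [List.nil_append] at hy2
            subst hx
            by_cases hbB : b ∈ B
            · by_cases hcC : c ∈ C
              · exact absurd (hserBC b hbB c hcC) hbc
              · refine ⟨p ++ [A], z, by simp, ?_, ?_⟩
                · have h1 : cnt b (p ++ [A]) = cnt b p + 1 := by
                    rw [cnt_append]
                    simp [cnt, List.filter_cons, (hmemA b).mpr (Or.inl hbB)]
                  have h2 : cnt b (p ++ [B]) = cnt b p + 1 := by
                    rw [cnt_append]; simp [cnt, List.filter_cons, hbB]
                  omega
                · have h1 : cnt c (p ++ [A]) = cnt c (p ++ [B]) := by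
                    rw [cnt_append, cnt_append]
                    congr 1
                    by_cases hcB : c ∈ B
                    · simp [cnt, List.filter_cons, hcB, (hmemA c).mpr (Or.inl hcB)]
                    · have hcA : c ∉ A := fun hA => by
                        rcases (hmemA c).mp hA with h' | h' <;> [exact hcB h'; exact hcC h']
                      simp [cnt, List.filter_cons, hcB, hcA]
                  omega
            · refine ⟨p, A :: z, rfl, ?_, ?_⟩
              · have : cnt b (p ++ [B]) = cnt b p := by
                  rw [cnt_append]; simp [cnt, List.filter_cons, hbB]
                omega
              · have : cnt c p ≤ cnt c (p ++ [B]) := by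
                  rw [cnt_append]; omega
                omega
          | cons C' a₃ =>
            rw [List.cons_append] at hy2
            obtain ⟨rfl, hz⟩ := List.cons.inj hy2
            refine ⟨p ++ A :: a₃, y, by rw [hz]; simp, ?_, ?_⟩
            · have : cnt b (p ++ A :: a₃) = cnt b x := by
                rw [hx, cnt_append, cnt_append, hind]
              omega
            · have : cnt c (p ++ A :: a₃) = cnt c x := by
                rw [hx, cnt_append, cnt_append, hind]
              omega

lemma exists_first [DecidableEq E] {a : E} :
    ∀ (v : List (Finset E)), 0 < cnt a v →
    ∃ i, ∃ h : i < v.length, a ∈ v[i] ∧ cnt a (v.take i) = 0 := by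
  intro v
  induction v with
  | nil => intro h; simp [cnt] at h
  | cons X r ih =>
    intro h
    by_cases hX : a ∈ X
    · exact ⟨0, by simp, hX, by simp [cnt]⟩
    · have h' : 0 < cnt a r := by
        rw [cnt_cons] at h; simpa [hX] using h
      obtain ⟨i, hi, hmem, hcnt⟩ := ih h'
      refine ⟨i + 1, by simpa using Nat.succ_lt_succ hi, by simpa using hmem, ?_⟩
      rw [List.take_succ_cons, cnt_cons]
      simp [hX, hcnt]

end Aux

/-- The first step of a canonical step sequence consists exactly of the events that can
occur in the first step of some congruent step sequence. -/
theorem stmt6 [DecidableEq E] [Fintype E] (sim ser : E → E → Prop)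
    (hsim_irr : ∀ a, ¬ sim a a) (hsim_symm : ∀ a b, sim a b → sim b a)
    (hser_sub : ∀ a b, ser a b → sim a b)
    (A : Finset E) (t : List (Finset E))
    (hu : IsStepSeq sim (A :: t)) (hcan : Canonical sim ser (A :: t)) :
    ∀ a : E, a ∈ A ↔
      ∃ (B : Finset E) (t' : List (Finset E)),
        IsStepSeq sim (B :: t') ∧ CTEquiv sim ser (B :: t') (A :: t) ∧ a ∈ B := by
  have hser_irr : ∀ e, ¬ ser e e := fun e h => hsim_irr e (hser_sub e e h)
  intro a
  constructor
  · intro ha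
    exact ⟨A, t, hu, fun c hc _ => hc.refl _, ha⟩
  · rintro ⟨B, t', hw, hequiv, haB⟩
    have hInv : CTInv ser (B :: t') (A :: t) :=
      hequiv (CTInv ser) (inv_equivalence ser) (fun x y hb => inv_base hser_irr hb)
    by_contra haA
    set L : List (Finset E) := A :: t with hLdef
    have hcntw : 0 < cnt a (B :: t') := by
      rw [cnt_cons]; simp [haB]
    have hcntv : 0 < cnt a L := by rw [← hInv.1 a]; exact hcntw
    obtain ⟨i, hiL, haiL, hfirst⟩ := exists_first L hcntv
    have hi0 : i ≠ 0 := by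
      rintro rfl
      exact haA (by simpa [hLdef] using haiL)
    obtain ⟨j, rfl⟩ : ∃ j, i = j + 1 :=
      ⟨i - 1, (Nat.succ_pred_eq_of_pos (Nat.pos_of_ne_zero hi0)).symm⟩
    have hjL : j < L.length := Nat.lt_of_succ_lt hiL
    set P : Finset E := L[j]'hjL with hPdef
    set Q : Finset E := L[j+1]'hiL with hQdef
    set Cs : Finset E := (Q ∩ B).filter (fun c => cnt c (L.take (j+1)) = 0) with hCdef
    have hmemC : ∀ c ∈ Cs, c ∈ Q ∧ c ∈ B ∧ cnt c (L.take (j+1)) = 0 := by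
      intro c hc
      rw [hCdef, Finset.mem_filter, Finset.mem_inter] at hc
      exact ⟨hc.1.1, hc.1.2, hc.2⟩
    have hCsub : Cs ⊆ Q := fun c hc => (hmemC c hc).1
    have haC : a ∈ Cs := by
      rw [hCdef, Finset.mem_filter, Finset.mem_inter]
      exact ⟨⟨haiL, haB⟩, hfirst⟩
    -- (1) everything in P serializes before everything in Cs
    have hPC : ∀ b ∈ P, ∀ c ∈ Cs, ser b c := by
      intro b hbP c hcC
      by_contra hbc
      have hBv : Before L b c (cnt b (L.take j)) 0 := by
        refine ⟨L.take (j+1), L.drop (j+1), (List.take_append_drop _ _).symm, ?_, ?_⟩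
        · rw [cnt_take_succ b L hjL]
          simp [← hPdef, hbP]
        · exact Nat.le_of_eq (hmemC c hcC).2.2
      have hBw : Before (B :: t') b c (cnt b (L.take j)) 0 :=
        (hInv.2 b c _ 0 hbc).mpr hBv
      obtain ⟨x, y, hxy, hn, hm⟩ := hBw
      match x, hxy with
      | [], _ => simp [cnt] at hn
      | X :: r, hxy =>
        obtain ⟨hXB, -⟩ := List.cons.inj hxy
        rw [cnt_cons, ← hXB] at hm
        simp [(hmemC c hcC).2.1] at hm
    -- (2) Cs serializes before the rest of Q
    have hCQ : ∀ c ∈ Cs, ∀ d ∈ Q \ Cs, ser c d := by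
      intro c hcC d hdQC
      rw [Finset.mem_sdiff] at hdQC
      obtain ⟨hdQ, hdnC⟩ := hdQC
      by_contra hcd
      set md := cnt d (L.take (j+1)) with hmd
      have hBw : Before (B :: t') c d 0 md := by
        refine ⟨[B], t', rfl, ?_, ?_⟩
        · simp [cnt, List.filter_cons, (hmemC c hcC).2.1]
        · by_cases hdB : d ∈ B
          · have hmd0 : md ≠ 0 := by
              intro h0
              apply hdnC
              rw [hCdef, Finset.mem_filter, Finset.mem_inter]
              exact ⟨⟨hdQ, hdB⟩, h0⟩
            have : cnt d [B] = 1 := by simp [cnt, List.filter_cons, hdB]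
            omega
          · have : cnt d [B] = 0 := by simp [cnt, List.filter_cons, hdB]
            omega
      have hBv : Before L c d 0 md := (hInv.2 c d 0 md hcd).mp hBw
      obtain ⟨x, y, hxy, hn, hm⟩ := hBv
      have hx : x = L.take x.length := by
        rw [hxy, List.take_left]
      have hxlen : j + 2 ≤ x.length := by
        by_contra hle
        have h1 : x.length ≤ j + 1 := by omega
        have h2 : cnt c x ≤ cnt c (L.take (j+1)) := by
          rw [hx]; exact cnt_take_le c L h1
        rw [(hmemC c hcC).2.2] at h2
        omega
      have h3 : cnt d (L.take (j+2)) ≤ cnt d x := by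
        rw [hx]; exact cnt_take_le d L hxlen
      have h4 : cnt d (L.take (j+2)) = md + 1 := by
        rw [cnt_take_succ d L hiL, ← hmd]
        simp [← hQdef, hdQ]
      omega
    -- FD contradiction
    have hQstep : IsStep sim Q := hu Q (List.getElem_mem hiL)
    have hFD : FD sim ser P Q := by
      refine ⟨Cs, ⟨⟨a, haC⟩, ?_⟩, hCsub, hPC, hCQ⟩
      intro x hx y hy hxy
      exact hQstep.2 x (hCsub hx) y (hCsub hy) hxy
    have hlt : j < L.length - 1 := by omega
    have hchain := List.isChain_iff_getElem.mp hcan j (by omega)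
    exact hchain hFD
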